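/- Let V be a real vector space, Δ ⊆ V a finite linearly independent subset, 𝔸 a nonzero additive subgroup of (ℝ,+), and J ⊆ Δ. Suppose λ = Σ_{α∈Δ} c_α α with all c_α ∈ 𝔸, and suppose there exists α₀ ∈ Δ ∖ J with c_{α₀} > 0. Then for every subset X ⊆ λ − ℤ₊Δ, the set X ∩ (λ − ℤ₊J) is a positive weak 𝔸-face of X. -/

import Mathlib

open Finsupp

/-- `R₊ := R ∩ [0,∞)`. -/
def Rplus (R : Set ℝ) : Set ℝ := R ∩ Set.Ici 0

/-- `ℓ(f) := Σ_v f(v)`. -/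
noncomputable def ell {V : Type*} [AddCommGroup V] [Module ℝ V] (f : V →₀ ℝ) : ℝ :=
  f.sum fun _ r => r

/-- `ℓ⃗(f) := Σ_v f(v) • v`. -/
noncomputable def vell {V : Type*} [AddCommGroup V] [Module ℝ V] (f : V →₀ ℝ) : V :=
  f.sum fun v r => r • v

/-- `f ∈ Fin(X,R)`: finitely supported, support in `X`, values in `R ∪ {0}`. -/
def IsFinSupp {V : Type*} [AddCommGroup V] [Module ℝ V] (X : Set V) (R : Set ℝ)
    (f : V →₀ ℝ) : Prop :=
  ↑f.support ⊆ X ∧ ∀ v, f v ∈ R ∪ {0}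

/-- `Y` is a weak `R`-face of `X`. -/
def IsWeakFace {V : Type*} [AddCommGroup V] [Module ℝ V] (X Y : Set V) (R : Set ℝ) : Prop :=
  ∀ f g : V →₀ ℝ, IsFinSupp X (Rplus R) f → IsFinSupp Y (Rplus R) g →
    ell f = ell g → 0 < ell g → vell f = vell g → ↑f.support ⊆ Y

/-- `Y` is a positive weak `R`-face of `X`. -/
def IsPosWeakFace {V : Type*} [AddCommGroup V] [Module ℝ V] (X Y : Set V) (R : Set ℝ) : Prop :=
  ∀ f g : V →₀ ℝ, IsFinSupp X (Rplus R) f → IsFinSupp Y (Rplus R) g →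
    vell f = vell g → ell g ≤ ell f ∧ (ell g = ell f ↔ ↑f.support ⊆ Y)

/-- `Y` is `(R',R)`-closed in `X`. -/
def IsRClosed {V : Type*} [AddCommGroup V] [Module ℝ V] (X Y : Set V) (R' R : Set ℝ) : Prop :=
  ∀ f g : V →₀ ℝ, IsFinSupp X R f → IsFinSupp Y R g →
    ell f = ell g → ell f ∈ R' → ell f ≠ 0 → vell f = vell g → ↑f.support ⊆ Y

/-- The maximizer set `X(φ)`. -/
def maximizer {V : Type*} [AddCommGroup V] [Module ℝ V] (X : Set V) (φ : V →ₗ[ℝ] ℝ) : Set V :=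
  {x | x ∈ X ∧ ∀ x' ∈ X, φ x' ≤ φ x}

/-- Suppose `λ = Σ_{α∈Δ} c_α α` with all `c_α ∈ 𝔸`, and some
`α₀ ∈ Δ ∖ J` has `c_{α₀} > 0`. Then for every `X ⊆ λ − ℤ₊Δ`, the subset
`X ∩ (λ − ℤ₊J)` is a positive weak `𝔸`-face of `X`. -/
theorem statement17 {V : Type*} [AddCommGroup V] [Module ℝ V]
    (Δ : Finset V)
    (hind : LinearIndependent ℝ (fun x : (Δ : Set V) => (x : V)))
    (𝔸 : AddSubgroup ℝ) (h𝔸 : 𝔸 ≠ ⊥)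
    (J : Finset V) (hJ : J ⊆ Δ)
    (c : V → ℝ) (hc : ∀ α ∈ Δ, c α ∈ 𝔸)
    (lam : V) (hlam : lam = ∑ α ∈ Δ, c α • α)
    (α₀ : V) (hα₀Δ : α₀ ∈ Δ) (hα₀J : α₀ ∉ J) (hc0 : 0 < c α₀)
    (X : Set V)
    (hX : X ⊆ {x : V | ∃ q ∈ AddSubmonoid.closure (Δ : Set V), x = lam - q}) :
    IsPosWeakFace X
      (X ∩ {x : V | ∃ q ∈ AddSubmonoid.closure (J : Set V), x = lam - q})
      (𝔸 : Set ℝ) := by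
  classical
  set T : ℝ := ∑ α ∈ Δ, |c α| with hT
  have hT0 : 0 ≤ T := Finset.sum_nonneg fun _ _ => abs_nonneg _
  set ε : ℝ := c α₀ / (2 * (1 + T)) with hε
  have hεpos : 0 < ε := div_pos hc0 (by linarith)
  set w : V → ℝ := fun v => if v ∈ J then 0 else if v = α₀ then 1 else if v ∈ Δ then ε else 0
    with hw
  have hind' : LinearIndepOn ℝ id (Δ : Set V) := hind
  set ψ : V →ₗ[ℝ] ℝ := (Module.Basis.extend hind').constr ℝ (fun i => w i) with hψ
  have hψΔ : ∀ α ∈ Δ, ψ α = w α := by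
    intro α hα
    have hmem : α ∈ hind'.extend (Set.subset_univ _) :=
      hind'.subset_extend _ hα
    have h1 : ((Module.Basis.extend hind') ⟨α, hmem⟩ : V) = α := Module.Basis.extend_apply_self hind' ⟨α, hmem⟩
    calc ψ α = ψ ((Module.Basis.extend hind') ⟨α, hmem⟩) := by rw [h1]
      _ = w α := Module.Basis.constr_basis _ _ _ _
  have hwJ : ∀ α ∈ J, w α = 0 := by intro α hα; simp [hw, hα]
  have hwpos : ∀ α ∈ Δ, α ∉ J → 0 < w α := by
    intro α hα hαJ
    simp only [hw]
    rw [if_neg hαJ]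
    by_cases h : α = α₀
    · rw [if_pos h]; norm_num
    · rw [if_neg h, if_pos hα]; exact hεpos
  have hwnn : ∀ α ∈ Δ, 0 ≤ w α := by
    intro α hα
    by_cases h : α ∈ J
    · rw [hwJ α h]
    · exact (hwpos α hα h).le
  -- ψ vanishes on the closure of J
  have hψJ : ∀ q ∈ AddSubmonoid.closure (J : Set V), ψ q = 0 := by
    intro q hq
    induction hq using AddSubmonoid.closure_induction with
    | mem x hx => rw [hψΔ x (hJ hx), hwJ x hx]
    | zero => simp
    | add x y _ _ hx hy => rw [map_add, hx, hy, add_zero]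
  -- ψ is nonneg on closure of Δ, and zero only on closure of J
  have hψΔq : ∀ q ∈ AddSubmonoid.closure (Δ : Set V),
      0 ≤ ψ q ∧ (ψ q = 0 → q ∈ AddSubmonoid.closure (J : Set V)) := by
    intro q hq
    induction hq using AddSubmonoid.closure_induction with
    | mem x hx =>
      refine ⟨by rw [hψΔ x hx]; exact hwnn x hx, fun h0 => ?_⟩
      rw [hψΔ x hx] at h0
      have hxJ : x ∈ J := by
        by_contra hxJ
        exact absurd h0 (ne_of_gt (hwpos x hx hxJ))
      exact AddSubmonoid.subset_closure hxJ
    | zero => exact ⟨by simp, fun _ => zero_mem _⟩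
    | add x y hxm hym hx hy =>
      refine ⟨by rw [map_add]; exact add_nonneg hx.1 hy.1, fun h0 => ?_⟩
      rw [map_add] at h0
      have hx0 : ψ x = 0 := le_antisymm (by linarith [hy.1]) hx.1
      have hy0 : ψ y = 0 := by linarith
      exact add_mem (hx.2 hx0) (hy.2 hy0)
  -- ψ lam is positive
  have hψlam : c α₀ / 2 ≤ ψ lam := by
    have hsum : ψ lam = ∑ α ∈ Δ, c α * w α := by
      rw [hlam, map_sum]
      exact Finset.sum_congr rfl fun α hα => by rw [map_smul, smul_eq_mul, hψΔ α hα]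
    have hw0 : w α₀ = 1 := by simp [hw, hα₀J]
    have hsplit : ∑ α ∈ Δ, c α * w α = c α₀ * w α₀ + ∑ α ∈ Δ.erase α₀, c α * w α :=
      (Finset.add_sum_erase Δ _ hα₀Δ).symm
    have hbound : |∑ α ∈ Δ.erase α₀, c α * w α| ≤ ε * T := by
      calc |∑ α ∈ Δ.erase α₀, c α * w α| ≤ ∑ α ∈ Δ.erase α₀, |c α * w α| :=
            Finset.abs_sum_le_sum_abs _ _
        _ ≤ ∑ α ∈ Δ.erase α₀, |c α| * ε := by
            refine Finset.sum_le_sum fun α hα => ?_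
            rw [abs_mul]
            refine mul_le_mul_of_nonneg_left ?_ (abs_nonneg _)
            have hαΔ : α ∈ Δ := Finset.mem_of_mem_erase hα
            have hαne : α ≠ α₀ := Finset.ne_of_mem_erase hα
            have : w α = 0 ∨ w α = ε := by
              simp only [hw]
              rw [if_neg hαne]
              by_cases h1 : α ∈ J
              · left; rw [if_pos h1]
              · right; rw [if_neg h1, if_pos hαΔ]
            rcases this with h | h <;> rw [h] <;> simp [hεpos.le, abs_of_nonneg hεpos.le]
        _ ≤ ∑ α ∈ Δ, |c α| * ε :=
            Finset.sum_le_sum_of_subset_of_nonneg (Finset.erase_subset _ _)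
              (fun _ _ _ => mul_nonneg (abs_nonneg _) hεpos.le)
        _ = ε * T := by
            rw [hT, Finset.mul_sum]
            exact Finset.sum_congr rfl fun _ _ => mul_comm _ _
    have hεT : ε * T ≤ c α₀ / 2 := by
      have : ε * (1 + T) = c α₀ / 2 := by
        rw [hε]; field_simp
      nlinarith
    rw [hsum, hsplit, hw0]
    have := abs_le.mp hbound
    linarith [this.1]
  have hψlampos : 0 < ψ lam := lt_of_lt_of_le (by linarith) hψlam
  -- main argument
  intro f g hf hg hvv
  have hfnn : ∀ v, 0 ≤ f v := by
    intro v
    rcases hf.2 v with h | h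
    · exact h.2
    · rw [Set.mem_singleton_iff.mp h]
  -- ψ v for v in support of f
  have hfv : ∀ v ∈ f.support, ψ v ≤ ψ lam ∧
      (ψ v = ψ lam → v ∈ X ∩ {x : V | ∃ q ∈ AddSubmonoid.closure (J : Set V), x = lam - q}) := by
    intro v hv
    have hvX : v ∈ X := hf.1 hv
    obtain ⟨q, hq, hvq⟩ := hX hvX
    obtain ⟨hq0, hq1⟩ := hψΔq q hq
    have hψv : ψ v = ψ lam - ψ q := by rw [hvq, map_sub]
    constructor
    · linarith
    · intro heq
      have : ψ q = 0 := by linarith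
      exact ⟨hvX, q, hq1 this, hvq⟩
  -- ψ w = ψ lam for w in support of g
  have hgv : ∀ v ∈ g.support, ψ v = ψ lam := by
    intro v hv
    obtain ⟨_, q, hq, hvq⟩ := hg.1 hv
    rw [hvq, map_sub, hψJ q hq, sub_zero]
  have h1 : ψ (vell f) = ∑ v ∈ f.support, f v * ψ v := by
    rw [vell, map_finsuppSum]
    simp [Finsupp.sum, smul_eq_mul]
  have h2 : ψ (vell g) = ell g * ψ lam := by
    rw [vell, map_finsuppSum]
    simp only [map_smul, smul_eq_mul]
    rw [Finsupp.sum, ell, Finsupp.sum, Finset.sum_mul]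
    exact Finset.sum_congr rfl fun v hv => by rw [hgv v hv]
  have hellf : ell f = ∑ v ∈ f.support, f v := rfl
  have key : ∑ v ∈ f.support, f v * (ψ lam - ψ v) = (ell f - ell g) * ψ lam := by
    have hcong := congrArg ψ hvv
    rw [h1, h2] at hcong
    calc ∑ v ∈ f.support, f v * (ψ lam - ψ v)
        = (∑ v ∈ f.support, f v) * ψ lam - ∑ v ∈ f.support, f v * ψ v := by
          rw [Finset.sum_mul, ← Finset.sum_sub_distrib]
          exact Finset.sum_congr rfl fun v _ => by ring
      _ = (ell f - ell g) * ψ lam := by rw [← hellf, hcong]; ring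
  have hterm_nn : ∀ v ∈ f.support, 0 ≤ f v * (ψ lam - ψ v) := fun v hv =>
    mul_nonneg (hfnn v) (by linarith [(hfv v hv).1])
  have hsum_nn : 0 ≤ (ell f - ell g) * ψ lam := key ▸ Finset.sum_nonneg hterm_nn
  have hle : ell g ≤ ell f := by nlinarith
  refine ⟨hle, ?_, ?_⟩
  · intro heq
    have hzero : ∑ v ∈ f.support, f v * (ψ lam - ψ v) = 0 := by rw [key, heq]; ring
    have := (Finset.sum_eq_zero_iff_of_nonneg hterm_nn).mp hzero
    intro v hv
    have hv' : v ∈ f.support := hv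
    have hfv0 : f v ≠ 0 := Finsupp.mem_support_iff.mp hv'
    have := this v hv'
    have hψv : ψ v = ψ lam := by
      rcases mul_eq_zero.mp this with h | h
      · exact absurd h hfv0
      · linarith
    exact (hfv v hv').2 hψv
  · intro hsub
    have hzero : ∑ v ∈ f.support, f v * (ψ lam - ψ v) = 0 :=
      Finset.sum_eq_zero fun v hv => by
        have : v ∈ X ∩ {x : V | ∃ q ∈ AddSubmonoid.closure (J : Set V), x = lam - q} := hsub hv
        obtain ⟨_, q, hq, hvq⟩ := this
        have hψv : ψ v = ψ lam := by rw [hvq, map_sub, hψJ q hq, sub_zero]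
        rw [hψv, sub_self, mul_zero]
    rw [hzero] at key
    rcases mul_eq_zero.mp key.symm with h | h
    · linarith
    · exact absurd h (ne_of_gt hψlampos)
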